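/- Let Y be a set of characters of M such that the union ⋃_{y ∈ Y} 𝒢(y) of their pseudo-orbits is weak-* dense in the character space of M. If a ∈ 𝔄 satisfies z(E(a* a)) = 0 for every character z ∈ ⋃_{y ∈ Y} 𝒢(y), then a = 0. (Consequently, the direct sum over y ∈ Y of the GNS representations of the states a ↦ y(E(a)) is faithful, hence isometric.) -/

import Mathlib

open scoped ComplexOrder InnerProductSpace

variable {A : Type*} [NormedRing A] [StarRing A] [CStarRing A]
  [NormedAlgebra ℂ A] [CompleteSpace A] [StarModule ℂ A]
  [PartialOrder A] [StarOrderedRing A]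

/-- `n` is a normalizer of the subalgebra `M`: `n* M n ⊆ M` and `n M n* ⊆ M`
(in particular `n*n ∈ M` and `n n* ∈ M`, taking `h = 1`). -/
structure IsNormalizer (M : StarSubalgebra ℂ A) (n : A) : Prop where
  conj_mem : ∀ h ∈ M, star n * h * n ∈ M
  conj_mem' : ∀ h ∈ M, n * h * star n ∈ M
  sq_mem : star n * n ∈ M
  sq_mem' : n * star n ∈ M

/-- `y = αₙ(x)`: the character `y` satisfies `x(n* h n) = y(h) · x(n*n)` for all `h ∈ M`. -/
def IsAlpha (M : StarSubalgebra ℂ A) (n : A) (hn : IsNormalizer M n)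
    (x y : M →⋆ₐ[ℂ] ℂ) : Prop :=
  ∀ h : M, x ⟨star n * (h : A) * n, hn.conj_mem (h : A) h.2⟩
    = y h * x ⟨star n * n, hn.sq_mem⟩

/-- `y` lies in the pseudo-orbit `𝒢(x₀)`: there is a normalizer `m` of `M` with
`x₀(m*m) ≠ 0` and `y = α_m(x₀)`. -/
def InPseudoOrbit (M : StarSubalgebra ℂ A) (x₀ y : M →⋆ₐ[ℂ] ℂ) : Prop :=
  ∃ m, ∃ hm : IsNormalizer M m,
    x₀ ⟨star m * m, hm.sq_mem⟩ ≠ 0 ∧ IsAlpha M m hm x₀ y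

set_option maxHeartbeats 1000000 in
set_option synthInstance.maxHeartbeats 1000000 in
/-- Let `Y` be a set of characters of `M` whose pseudo-orbits have weak-* dense union in the
character space of `M` (density spelled out via finite sets of elements of `M` and `ε > 0`).
If `E` is faithful and `z(E(a* a)) = 0` for every character `z` in `⋃_{y ∈ Y} 𝒢(y)`,
then `a = 0`. -/
theorem eq_zero_of_vanishes_on_dense_union_of_pseudoOrbits
    (M : StarSubalgebra ℂ A) (hMclosed : IsClosed (M : Set A))
    (hMcomm : ∀ a ∈ M, ∀ b ∈ M, a * b = b * a)
    (E : A →ₗ[ℂ] A)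
    (hErange : ∀ a, E a ∈ M)
    (hEfix : ∀ h ∈ M, E h = h)
    (hEpos : ∀ a : A, 0 ≤ a → 0 ≤ E a)
    (hEcov : ∀ k, IsNormalizer M k → ∀ a, E (star k * a * k) = star k * E a * k)
    (hEfaithful : ∀ a : A, E (star a * a) = 0 → a = 0)
    (Y : Set (M →⋆ₐ[ℂ] ℂ))
    (hdense : ∀ (x : M →⋆ₐ[ℂ] ℂ) (F : Finset M) (ε : ℝ), 0 < ε →
      ∃ y ∈ Y, ∃ z : M →⋆ₐ[ℂ] ℂ, InPseudoOrbit M y z ∧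
        ∀ h ∈ F, ‖z h - x h‖ < ε) :
    ∀ a : A,
      (∀ y ∈ Y, ∀ z : M →⋆ₐ[ℂ] ℂ, InPseudoOrbit M y z →
        z ⟨E (star a * a), hErange _⟩ = 0) →
      a = 0 := by
  intro a ha
  set b : M := ⟨E (star a * a), hErange _⟩ with hbdef
  have hchar : ∀ x : M →⋆ₐ[ℂ] ℂ, x b = 0 := by
    intro x
    by_contra hx
    have hpos : 0 < ‖x b‖ := by
      simpa using hx
    obtain ⟨y, hy, z, hz, hclose⟩ := hdense x {b} _ hpos
    have hzb : z b = 0 := ha y hy z hz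
    have hlt := hclose b (Finset.mem_singleton_self b)
    rw [hzb, zero_sub, norm_neg] at hlt
    exact lt_irrefl _ hlt
  have hb0 : b = 0 := by
    letI : CStarAlgebra A := { }
    haveI : IsClosed (M : Set A) := hMclosed
    letI : CommCStarAlgebra M :=
      { StarSubalgebra.cstarAlgebra M with
        mul_comm := fun x y => Subtype.ext (hMcomm x x.2 y y.2) }
    have hspec : spectrum ℂ b ⊆ {0} := by
      intro w hw
      obtain ⟨f, hf⟩ := WeakDual.CharacterSpace.mem_spectrum_iff_exists.mp hw
      let ψ : M →⋆ₐ[ℂ] ℂ :=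
        { toFun := f
          map_one' := map_one f
          map_mul' := map_mul f
          map_zero' := map_zero f
          map_add' := map_add f
          commutes' := AlgHomClass.commutes f
          map_star' := fun r => map_star f r }
      rw [← hf]
      exact hchar ψ
    have hnn : (0 : A) ≤ E (star a * a) := hEpos _ (star_mul_self_nonneg a)
    have hsa' : IsSelfAdjoint b := Subtype.ext (IsSelfAdjoint.of_nonneg hnn).star_eq
    have hrad : spectralRadius ℂ b = 0 := by
      rw [spectralRadius]
      refine le_antisymm (iSup₂_le fun k hk => ?_) zero_le
      have hk0 : k = 0 := hspec hk
      simp [hk0]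
    have h1 : (‖b‖₊ : ENNReal) = 0 := by rw [← hsa'.spectralRadius_eq_nnnorm, hrad]
    simpa using h1
  have hE0 : E (star a * a) = 0 := by
    have := congrArg Subtype.val hb0
    simpa [hbdef] using this
  exact hEfaithful a hE0
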